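/- Let f ∈ G(ℝ) with f ≠ 0, and let (f_ε)_ε be a representative of f. The following are equivalent: (1) f is a zero divisor in G(ℝ), i.e. there exists g ∈ G(ℝ), g ≠ 0, with f·g = 0 in G(ℝ); (2) there exist a compact set K ⊂ ℝ, a net (x_ε)_{ε∈(0,1]} of points of K, a real ρ ≥ 0, and a sequence (ε_n) with ε_n → 0, such that for every k ≥ 0 and every x ∈ [x_{ε_k} − ε_k^ρ, x_{ε_k} + ε_k^ρ] one has |f_{ε_k}(x)| < ε_k^k. -/

import Mathlib

open Set Filter Topology MeasureTheory

noncomputable section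

variable {E F : Type*} [NormedAddCommGroup E] [NormedSpace ℝ E]
  [NormedAddCommGroup F] [NormedSpace ℝ F]

/-- A net of smooth functions, indexed by `ε ∈ (0,1]`, is *moderate* on the open set `Ω`:
all iterated derivatives are `O(ε^{-N})` on compact subsets, for some `N`. -/
def IsModerate (Ω : Set E) (u : ℝ → E → F) : Prop :=
  (∀ ε ∈ Set.Ioc (0:ℝ) 1, ContDiffOn ℝ (⊤:ℕ∞) (u ε) Ω) ∧
  ∀ K : Set E, IsCompact K → K ⊆ Ω → ∀ n : ℕ, ∃ N : ℕ, ∃ C : ℝ, ∃ ε₀ : ℝ, 0 < ε₀ ∧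
    ∀ ε : ℝ, 0 < ε → ε < ε₀ → ∀ x ∈ K,
      ‖iteratedFDerivWithin ℝ n (u ε) Ω x‖ ≤ C * ε ^ (-(N:ℤ))

/-- A net of smooth functions is *negligible* on `Ω`: all iterated derivatives are `O(ε^m)`
on compact subsets, for every `m`. -/
def IsNegligible (Ω : Set E) (u : ℝ → E → F) : Prop :=
  (∀ ε ∈ Set.Ioc (0:ℝ) 1, ContDiffOn ℝ (⊤:ℕ∞) (u ε) Ω) ∧
  ∀ K : Set E, IsCompact K → K ⊆ Ω → ∀ n : ℕ, ∀ m : ℕ, ∃ C : ℝ, ∃ ε₀ : ℝ, 0 < ε₀ ∧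
    ∀ ε : ℝ, 0 < ε → ε < ε₀ → ∀ x ∈ K,
      ‖iteratedFDerivWithin ℝ n (u ε) Ω x‖ ≤ C * ε ^ m

/-- A net of numbers is *moderate*: `O(ε^{-N})` for some `N`. -/
def NumModerate (c : ℝ → F) : Prop :=
  ∃ N : ℕ, ∃ C : ℝ, ∃ ε₀ : ℝ, 0 < ε₀ ∧ ∀ ε : ℝ, 0 < ε → ε < ε₀ → ‖c ε‖ ≤ C * ε ^ (-(N:ℤ))

/-- A net of numbers is *negligible*: `O(ε^m)` for every `m`. -/
def NumNegligible (c : ℝ → F) : Prop :=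
  ∀ m : ℕ, ∃ C : ℝ, ∃ ε₀ : ℝ, 0 < ε₀ ∧ ∀ ε : ℝ, 0 < ε → ε < ε₀ → ‖c ε‖ ≤ C * ε ^ m

/-- A net of points is a representative of a *compactly supported generalized point* of `Ω`. -/
def CompactlySupportedPoint (Ω : Set E) (a : ℝ → E) : Prop :=
  ∃ K : Set E, IsCompact K ∧ K ⊆ Ω ∧ ∃ ε₀ : ℝ, 0 < ε₀ ∧ ∀ ε : ℝ, 0 < ε → ε < ε₀ → a ε ∈ K

/-- The partial order on generalized reals, on representatives: `a ≤ b` iff `b - a` has a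
representative with all terms nonnegative, i.e. `a ε + n ε ≤ b ε` for some negligible `n`. -/
def TildeLe (a b : ℝ → ℝ) : Prop :=
  ∃ n : ℝ → ℝ, NumNegligible n ∧ ∀ ε ∈ Set.Ioc (0:ℝ) 1, a ε + n ε ≤ b ε

/-- Strict order `a << b`: `b - a` is strictly positive, i.e. `b ε - a ε > ε^m` for some `m`
and all small `ε`. -/
def TildeLt (a b : ℝ → ℝ) : Prop :=
  ∃ m : ℕ, ∃ ε₀ : ℝ, 0 < ε₀ ∧ ∀ ε : ℝ, 0 < ε → ε < ε₀ → a ε + ε ^ m < b ε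


section ZD_Aux

variable {E' : Type*} [NormedAddCommGroup E'] [NormedSpace ℝ E']

lemma smooth_iteratedDeriv {F : ℝ → E'} (hF : ContDiff ℝ (⊤:ℕ∞) F) (n : ℕ) :
    ContDiff ℝ (⊤:ℕ∞) (iteratedDeriv n F) := by
  rw [iteratedDeriv_eq_iterate]; exact hF.iterate_deriv n


lemma key_deriv_bound {F : ℝ → E'} (hF : ContDiff ℝ (⊤:ℕ∞) F) {a L A B : ℝ} (hL : 0 < L)
    (h0 : ∀ y ∈ Icc a (a+L), ‖F y‖ ≤ A)
    (h2 : ∀ y ∈ Icc a (a+L), ‖deriv (deriv F) y‖ ≤ B) :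
    ‖deriv F a‖ ≤ 2*A/L + B*L := by
  have ha : a ∈ Icc a (a+L) := ⟨le_refl _, by linarith⟩
  have haL : a + L ∈ Icc a (a+L) := ⟨by linarith, le_refl _⟩
  have hB : 0 ≤ B := le_trans (norm_nonneg _) (h2 a ha)
  have hF1 : Differentiable ℝ F := (contDiff_infty_iff_deriv.mp hF).1
  have hF2 : Differentiable ℝ (deriv F) :=
    (contDiff_infty_iff_deriv.mp (contDiff_infty_iff_deriv.mp hF).2).1
  have h1 : ∀ t ∈ Icc a (a+L), ‖deriv F t - deriv F a‖ ≤ B * L := by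
    intro t ht
    have hmvt := Convex.norm_image_sub_le_of_norm_deriv_le (fun x _ => hF2 x)
      (fun x hx => h2 x hx) (convex_Icc _ _) ha ht
    refine hmvt.trans ?_
    have hta : ‖t - a‖ ≤ L := by
      rw [Real.norm_eq_abs, abs_le]
      constructor
      · linarith [ht.1]
      · linarith [ht.2]
    nlinarith [norm_nonneg (t - a)]
  set G := (fun t => F t - (t - a) • deriv F a) with hGdef
  have hGd : ∀ t, HasDerivAt G (deriv F t - deriv F a) t := by
    intro t
    exact ((hF1 t).hasDerivAt).sub
      (by simpa using ((hasDerivAt_id t).sub_const a).smul_const (deriv F a))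
  have hMVT : ‖G (a+L) - G a‖ ≤ (B*L) * ‖(a+L) - a‖ := by
    refine Convex.norm_image_sub_le_of_norm_deriv_le
      (fun x _ => (hGd x).differentiableAt) (fun x hx => ?_) (convex_Icc _ _) ha haL
    rw [(hGd x).deriv]; exact h1 x hx
  have h5 : ‖(a+L) - a‖ = L := by
    rw [Real.norm_eq_abs, add_sub_cancel_left, abs_of_pos hL]
  rw [h5] at hMVT
  have hGa : G a = F a := by simp [hGdef]
  have hGaL : G (a+L) = F (a+L) - L • deriv F a := by simp [hGdef]
  have hsplit : L • deriv F a = (F (a+L) - F a) - (G (a+L) - G a) := by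
    rw [hGaL, hGa]; abel
  have key : L * ‖deriv F a‖ ≤ 2*A + B*L*L := by
    have h6 : ‖L • deriv F a‖ ≤ (A + A) + B*L*L := by
      rw [hsplit]
      calc ‖(F (a+L) - F a) - (G (a+L) - G a)‖
          ≤ ‖F (a+L) - F a‖ + ‖G (a+L) - G a‖ := norm_sub_le _ _
        _ ≤ (‖F (a+L)‖ + ‖F a‖) + B*L*L := by
            refine add_le_add (norm_sub_le _ _) (by nlinarith)
        _ ≤ (A + A) + B*L*L := by
            have := h0 _ haL; have := h0 _ ha; gcongr
    rw [norm_smul, Real.norm_eq_abs, abs_of_pos hL] at h6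
    linarith
  rw [← sub_nonneg]
  have heq : 2*A/L + B*L - ‖deriv F a‖ = (2*A + B*L*L - L*‖deriv F a‖)/L := by
    field_simp
    try ring
  rw [heq]
  exact div_nonneg (by linarith) hL.le


lemma bootstrap_neg {u : ℝ → ℝ → ℂ}
    (hsm : ∀ ε ∈ Set.Ioc (0:ℝ) 1, ContDiff ℝ (⊤:ℕ∞) (u ε))
    (hmod : ∀ K : Set ℝ, IsCompact K → ∀ n : ℕ, ∃ N : ℕ, ∃ C : ℝ, ∃ ε₀ : ℝ, 0 < ε₀ ∧
      ∀ ε : ℝ, 0 < ε → ε < ε₀ → ∀ x ∈ K, ‖iteratedDeriv n (u ε) x‖ ≤ C * ε ^ (-(N:ℤ)))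
    (h0 : ∀ K : Set ℝ, IsCompact K → ∀ m : ℕ, ∃ C : ℝ, ∃ ε₀ : ℝ, 0 < ε₀ ∧
      ∀ ε : ℝ, 0 < ε → ε < ε₀ → ∀ x ∈ K, ‖u ε x‖ ≤ C * ε ^ m) :
    ∀ n : ℕ, ∀ K : Set ℝ, IsCompact K → ∀ m : ℕ, ∃ C : ℝ, ∃ ε₀ : ℝ, 0 < ε₀ ∧
      ∀ ε : ℝ, 0 < ε → ε < ε₀ → ∀ x ∈ K, ‖iteratedDeriv n (u ε) x‖ ≤ C * ε ^ m := by
  intro n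
  induction n with
  | zero => intro K hK m; simpa [iteratedDeriv_zero] using h0 K hK m
  | succ n IH =>
    intro K hK m
    obtain ⟨N, C₂, ε₂, hε₂, hC₂b⟩ := hmod (Metric.cthickening 1 K) hK.cthickening (n+2)
    obtain ⟨C₁, ε₁, hε₁, hC₁b⟩ := IH (Metric.cthickening 1 K) hK.cthickening (2*m+N+1)
    refine ⟨2*(max C₁ 0) + (max C₂ 0), min (min ε₁ ε₂) 1, by positivity, ?_⟩
    intro ε hε hεlt x hx
    have hεε₁ : ε < ε₁ := lt_of_lt_of_le hεlt ((min_le_left _ _).trans (min_le_left _ _))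
    have hεε₂ : ε < ε₂ := lt_of_lt_of_le hεlt ((min_le_left _ _).trans (min_le_right _ _))
    have hε1 : ε ≤ 1 := le_of_lt (lt_of_lt_of_le hεlt (min_le_right _ _))
    have hu : ContDiff ℝ (⊤:ℕ∞) (u ε) := hsm ε ⟨hε, hε1⟩
    set L := ε ^ (m+N+1) with hLdef
    have hL : 0 < L := pow_pos hε _
    have hL1 : L ≤ 1 := pow_le_one₀ hε.le hε1
    have hsub : Icc x (x+L) ⊆ Metric.cthickening 1 K := by
      intro y hy
      refine Metric.mem_cthickening_of_dist_le y x 1 K hx ?_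
      rw [Real.dist_eq, abs_le]
      constructor
      · linarith [hy.1]
      · linarith [hy.2]
    have hbd := key_deriv_bound (F := iteratedDeriv n (u ε)) (smooth_iteratedDeriv hu n) hL
      (A := max C₁ 0 * ε ^ (2*m+N+1)) (B := max C₂ 0 * ε ^ (-(N:ℤ)))
      (fun y hy => le_trans (hC₁b ε hε hεε₁ y (hsub hy))
        (mul_le_mul_of_nonneg_right (le_max_left _ _) (pow_nonneg hε.le _)))
      (fun y hy => by
        have hdd : deriv (deriv (iteratedDeriv n (u ε))) = iteratedDeriv (n+2) (u ε) := by
          rw [← iteratedDeriv_succ, ← iteratedDeriv_succ]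
        rw [hdd]
        exact le_trans (hC₂b ε hε hεε₂ y (hsub hy))
          (mul_le_mul_of_nonneg_right (le_max_left _ _) (zpow_nonneg hε.le _)))
    rw [iteratedDeriv_succ]
    refine hbd.trans ?_
    have harith1 : 2*(max C₁ 0 * ε ^ (2*m+N+1))/L = 2*(max C₁ 0) * ε ^ m := by
      rw [hLdef]
      have : (2*m+N+1) = m + (m+N+1) := by ring
      rw [this, pow_add]
      field_simp
    have harith2 : (max C₂ 0 * ε ^ (-(N:ℤ))) * L ≤ max C₂ 0 * ε ^ m := by
      rw [hLdef]
      have hz : ε ^ (-(N:ℤ)) * ε ^ (m+N+1) = ε ^ (m+1) := by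
        rw [← zpow_natCast ε (m+N+1), ← zpow_add₀ (ne_of_gt hε), ← zpow_natCast ε (m+1)]
        congr 1
        push_cast
        ring
      rw [mul_assoc, hz]
      exact mul_le_mul_of_nonneg_left (pow_le_pow_of_le_one hε.le hε1 (Nat.le_succ m)) (le_max_right _ _)
    rw [harith1]
    nlinarith [pow_pos hε m, le_max_right C₂ (0:ℝ), mul_nonneg (le_max_right C₁ (0:ℝ)) (pow_pos hε m).le]


lemma decay {f : ℝ → ℝ → ℂ}
    (hsm : ∀ ε ∈ Set.Ioc (0:ℝ) 1, ContDiff ℝ (⊤:ℕ∞) (f ε))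
    (hmod : ∀ K : Set ℝ, IsCompact K → ∀ n : ℕ, ∃ N : ℕ, ∃ C : ℝ, ∃ ε₀ : ℝ, 0 < ε₀ ∧
      ∀ ε : ℝ, 0 < ε → ε < ε₀ → ∀ x ∈ K, ‖iteratedDeriv n (f ε) x‖ ≤ C * ε ^ (-(N:ℤ)))
    {K : Set ℝ} (hK : IsCompact K) {ρ : ℝ} (hρ : 0 ≤ ρ) :
    ∀ (j t : ℕ), ∃ M : ℕ, ∃ C : ℝ, 0 ≤ C ∧ ∃ ε₁ : ℝ, 0 < ε₁ ∧ ε₁ ≤ 1 ∧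
      ∀ ε : ℝ, 0 < ε → ε < ε₁ → ∀ c ∈ K,
      (∀ y ∈ Icc (c - ε ^ ρ) (c + ε ^ ρ), ‖f ε y‖ ≤ ε ^ M) →
      ∀ i ≤ j, ∀ y ∈ Icc (c - ε ^ ρ / 2 ^ j) (c + ε ^ ρ / 2 ^ j),
        ‖iteratedDeriv i (f ε) y‖ ≤ C * ε ^ t := by
  intro j
  induction j with
  | zero =>
    intro t
    refine ⟨t, 1, zero_le_one, 1, one_pos, le_rfl, ?_⟩
    intro ε hε hεlt c hc hyp i hi y hy
    interval_cases i
    rw [iteratedDeriv_zero, one_mul]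
    refine hyp y ?_
    simpa using hy
  | succ j IH =>
    intro t
    have hRρ : ρ + 1 ≤ ((⌈ρ⌉₊ + 1 : ℕ) : ℝ) := by
      push_cast; linarith [Nat.le_ceil ρ]
    set R := ⌈ρ⌉₊ + 1 with hRdef
    obtain ⟨N, C₂, ε₂, hε₂, hC₂b⟩ := hmod (Metric.cthickening 1 K) hK.cthickening (j+2)
    set ℓ := t + N + R with hℓdef
    obtain ⟨M₁, C₁, hC₁0, ε₁', hε₁', hε₁'1, hIH⟩ := IH (t + ℓ)
    refine ⟨M₁, 2*C₁ + max C₂ 0 + C₁, by positivity, min (min ε₁' ε₂) ((1/2) ^ (j+1)),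
      by positivity, ?_, ?_⟩
    · refine (min_le_right _ _).trans ?_
      exact pow_le_one₀ (by norm_num) (by norm_num)
    intro ε hε hεlt c hc hyp i hi y hy
    have hεε₁ : ε < ε₁' := lt_of_lt_of_le hεlt ((min_le_left _ _).trans (min_le_left _ _))
    have hεε₂ : ε < ε₂ := lt_of_lt_of_le hεlt ((min_le_left _ _).trans (min_le_right _ _))
    have hεhalf : ε ≤ (1/2:ℝ) ^ (j+1) := le_of_lt (lt_of_lt_of_le hεlt (min_le_right _ _))
    have hε1 : ε ≤ 1 := hεhalf.trans (pow_le_one₀ (by norm_num) (by norm_num))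
    have hrpos : (0:ℝ) < ε ^ ρ := Real.rpow_pos_of_pos hε ρ
    have hrle1 : ε ^ ρ ≤ 1 := Real.rpow_le_one hε.le hε1 hρ
    have h2pow : (0:ℝ) < 2 ^ j := by positivity
    have hhalf : ε ^ ρ / 2 ^ (j+1) + ε ^ ρ / 2 ^ (j+1) = ε ^ ρ / 2 ^ j := by
      rw [pow_succ]; field_simp; ring
    -- the inner interval is inside the outer one
    have hsubj : Icc (c - ε ^ ρ / 2 ^ (j+1)) (c + ε ^ ρ / 2 ^ (j+1)) ⊆
        Icc (c - ε ^ ρ / 2 ^ j) (c + ε ^ ρ / 2 ^ j) := by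
      have hq : 0 ≤ ε ^ ρ / 2 ^ (j+1) := by positivity
      apply Icc_subset_Icc <;> linarith [hhalf, hq]
    -- case i ≤ j
    rcases Nat.lt_or_ge i (j+1) with hij | hij
    · have := hIH ε hε hεε₁ c hc hyp i (by omega) y (hsubj hy)
      refine this.trans ?_
      have : ε ^ (t + ℓ) ≤ ε ^ t := pow_le_pow_of_le_one hε.le hε1 (by omega)
      nlinarith [pow_nonneg hε.le t, le_max_right C₂ (0:ℝ), pow_nonneg hε.le (t+ℓ)]
    · have hieq : i = j + 1 := by omega
      subst hieq
      set L := ε ^ ℓ with hLdef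
      have hL : 0 < L := pow_pos hε _
      -- L ≤ ε^ρ / 2^(j+1)
      have hLle : L ≤ ε ^ ρ / 2 ^ (j+1) := by
        have e1 : L = ε ^ (ℓ:ℝ) := (Real.rpow_natCast ε ℓ).symm
        have e2 : ε ^ ((ℓ:ℕ):ℝ) ≤ ε ^ (ρ + 1) := by
          apply Real.rpow_le_rpow_of_exponent_ge hε hε1
          have : (R:ℝ) ≤ (ℓ:ℝ) := by exact_mod_cast Nat.le_add_left R (t+N)
          linarith
        have e3 : ε ^ (ρ + 1) = ε ^ ρ * ε := by
          rw [Real.rpow_add hε, Real.rpow_one]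
        have e4 : ε ^ ρ * ε ≤ ε ^ ρ * (1/2:ℝ)^(j+1) :=
          mul_le_mul_of_nonneg_left hεhalf hrpos.le
        have e5 : ε ^ ρ * (1/2:ℝ)^(j+1) = ε ^ ρ / 2 ^ (j+1) := by
          rw [div_pow, one_pow]; ring
        rw [e1]; rw [e3] at e2; exact e2.trans (e4.trans_eq e5)
      -- Icc y (y+L) inside the j-interval
      have hsubYL : Icc y (y+L) ⊆ Icc (c - ε ^ ρ / 2 ^ j) (c + ε ^ ρ / 2 ^ j) := by
        apply Icc_subset_Icc
        · linarith [hy.1, (hsubj hy).1]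
        · linarith [hy.2]
      have hsubth : Icc (c - ε ^ ρ / 2 ^ j) (c + ε ^ ρ / 2 ^ j) ⊆ Metric.cthickening 1 K := by
        intro z hz
        refine Metric.mem_cthickening_of_dist_le z c 1 K hc ?_
        rw [Real.dist_eq, abs_le]
        have h1 : ε ^ ρ / 2 ^ j ≤ 1 := by
          refine (div_le_one h2pow).mpr ?_
          calc ε ^ ρ ≤ 1 := hrle1
            _ ≤ 2 ^ j := one_le_pow₀ (by norm_num)
        constructor <;> [linarith [hz.1]; linarith [hz.2]]
      have hu : ContDiff ℝ (⊤:ℕ∞) (f ε) := hsm ε ⟨hε, hε1⟩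
      have hbd := key_deriv_bound (F := iteratedDeriv j (f ε)) (smooth_iteratedDeriv hu j) hL
        (A := C₁ * ε ^ (t + ℓ)) (B := max C₂ 0 * ε ^ (-(N:ℤ)))
        (fun z hz => hIH ε hε hεε₁ c hc hyp j le_rfl z (hsubYL hz))
        (fun z hz => by
          have hdd : deriv (deriv (iteratedDeriv j (f ε))) = iteratedDeriv (j+2) (f ε) := by
            rw [← iteratedDeriv_succ, ← iteratedDeriv_succ]
          rw [hdd]
          exact le_trans (hC₂b ε hε hεε₂ z (hsubth (hsubYL hz)))
            (mul_le_mul_of_nonneg_right (le_max_left _ _) (zpow_nonneg hε.le _)))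
      rw [iteratedDeriv_succ]
      refine hbd.trans ?_
      have harith1 : 2*(C₁ * ε ^ (t + ℓ))/L = 2*C₁ * ε ^ t := by
        rw [hLdef, pow_add]
        field_simp
      have harith2 : (max C₂ 0 * ε ^ (-(N:ℤ))) * L ≤ max C₂ 0 * ε ^ t := by
        rw [hLdef]
        have hz : ε ^ (-(N:ℤ)) * ε ^ ℓ = ε ^ (t + R) := by
          rw [← zpow_natCast ε ℓ, ← zpow_add₀ (ne_of_gt hε), ← zpow_natCast ε (t+R)]
          congr 1
          rw [hℓdef]
          push_cast
          ring
        rw [mul_assoc, hz]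
        exact mul_le_mul_of_nonneg_left
          (pow_le_pow_of_le_one hε.le hε1 (by omega)) (le_max_right _ _)
      rw [harith1]
      nlinarith [pow_nonneg hε.le t, mul_nonneg hC₁0 (pow_nonneg hε.le t)]


def bb : ContDiffBump (0:ℝ) := ⟨1, 2, one_pos, one_lt_two⟩

def bC : ℝ → ℂ := fun x => ((bb x : ℝ) : ℂ)

lemma bC_smooth : ContDiff ℝ (⊤:ℕ∞) bC :=
  Complex.ofRealCLM.contDiff.comp bb.contDiff

lemma bC_zero {x : ℝ} (hx : 2 ≤ |x|) : bC x = 0 := by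
  have : bb x = 0 := bb.zero_of_le_dist (by simpa [Real.dist_eq, bb] using hx)
  simp [bC, this]

lemma bC_one : bC 0 = 1 := by
  have : bb 0 = 1 := bb.one_of_mem_closedBall (by simp [bb])
  simp [bC, this]

lemma bC_bound (n : ℕ) : ∃ C : ℝ, 0 ≤ C ∧ ∀ z : ℝ, ‖iteratedDeriv n bC z‖ ≤ C := by
  have hcs : HasCompactSupport bC :=
    (bb.hasCompactSupport).comp_left (g := Complex.ofReal) Complex.ofReal_zero
  have hcont : Continuous (iteratedFDeriv ℝ n bC) :=
    bC_smooth.continuous_iteratedFDeriv (by exact_mod_cast le_top)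
  obtain ⟨C, hC⟩ := hcont.bounded_above_of_compact_support (hcs.iteratedFDeriv n)
  refine ⟨max C 0, le_max_right _ _, fun z => ?_⟩
  rw [← norm_iteratedFDeriv_eq_norm_iteratedDeriv]
  exact (hC z).trans (le_max_left _ _)

lemma scaled_iteratedDeriv (n : ℕ) (cc a : ℝ) :
    iteratedDeriv n (fun y => bC (cc * (y - a)))
      = fun y => cc ^ n • iteratedDeriv n bC (cc * (y - a)) := by
  set h : ℝ → ℂ := fun x => bC (x + (-(cc*a))) with hh
  have hsmth : ContDiff ℝ (n:ℕ∞) h := by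
    rw [hh]
    exact (bC_smooth.of_le (by exact_mod_cast le_top)).comp ((contDiff_id.add contDiff_const))
  have e0 : (fun y => bC (cc * (y - a))) = (fun y => h (cc * y)) := by
    funext y; rw [hh]; congr 1; ring
  have e1 := iteratedDeriv_comp_const_smul (n := n) hsmth cc
  have e2 : iteratedDeriv n h = fun t => iteratedDeriv n bC (t + (-(cc*a))) := by
    rw [hh]; exact iteratedDeriv_comp_add_const n bC (-(cc*a))
  rw [e0, e1, e2]
  funext y
  congr 2
  ring


lemma zpow_neg_mono {ε : ℝ} (hε : 0 < ε) (hε1 : ε ≤ 1) {a b : ℕ} (hab : a ≤ b) :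
    ε ^ (-(a:ℤ)) ≤ ε ^ (-(b:ℤ)) := by
  rw [zpow_neg, zpow_neg, zpow_natCast, zpow_natCast]
  exact inv_anti₀ (pow_pos hε b) (pow_le_pow_of_le_one hε.le hε1 hab)


/-- uniform bound on iterated derivatives of the scaled bump -/
lemma scaled_bump_bound {ρ : ℝ} (hρ : 0 ≤ ρ) (n : ℕ) :
    ∃ (Nn : ℕ) (Cn : ℝ), 0 ≤ Cn ∧ ∀ ε : ℝ, 0 < ε → ε ≤ 1 → ∀ a y : ℝ,
      ‖iteratedDeriv n (fun z => bC ((ε ^ (ρ+1))⁻¹ * (z - a))) y‖ ≤ Cn * ε ^ (-(Nn:ℤ)) := by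
  obtain ⟨Cb, hCb0, hCb⟩ := bC_bound n
  refine ⟨n * (⌈ρ⌉₊ + 1), Cb, hCb0, ?_⟩
  intro ε hε hε1 a y
  rw [scaled_iteratedDeriv]
  have hδ : (0:ℝ) < ε ^ (ρ+1) := Real.rpow_pos_of_pos hε _
  rw [norm_smul, Real.norm_eq_abs]
  have hccpow : |((ε ^ (ρ+1))⁻¹) ^ n| = ((ε ^ (ρ+1))⁻¹) ^ n := abs_of_pos (by positivity)
  rw [hccpow]
  have key : ((ε ^ (ρ+1))⁻¹) ^ n ≤ ε ^ (-((n * (⌈ρ⌉₊ + 1) : ℕ) : ℤ)) := by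
    have e1 : ((ε ^ (ρ+1))⁻¹) ^ n = ε ^ (-((ρ+1) * n)) := by
      rw [← Real.rpow_neg hε.le, ← Real.rpow_natCast (ε ^ (-(ρ+1))) n,
        ← Real.rpow_mul hε.le]
      ring_nf
    rw [e1]
    have e2 : ε ^ (-((ρ+1) * n)) ≤ ε ^ (-(((n * (⌈ρ⌉₊ + 1) : ℕ) : ℝ))) := by
      apply Real.rpow_le_rpow_of_exponent_ge hε hε1
      have h1 : (ρ+1) * n ≤ ((n * (⌈ρ⌉₊ + 1) : ℕ) : ℝ) := by
        push_cast
        have := Nat.le_ceil ρ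
        nlinarith [(show (0:ℝ) ≤ (n:ℝ) from Nat.cast_nonneg n)]
      linarith
    refine e2.trans_eq ?_
    rw [show (-(((n * (⌈ρ⌉₊ + 1) : ℕ)) : ℝ)) = (((-((n * (⌈ρ⌉₊ + 1) : ℕ) : ℤ)) : ℤ) : ℝ) by push_cast; ring,
      Real.rpow_intCast]
  calc ((ε ^ (ρ+1))⁻¹) ^ n * ‖iteratedDeriv n bC ((ε ^ (ρ+1))⁻¹ * (y - a))‖
      ≤ ε ^ (-((n * (⌈ρ⌉₊ + 1) : ℕ) : ℤ)) * Cb := by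
        exact mul_le_mul key (hCb _) (norm_nonneg _) (zpow_nonneg hε.le _)
    _ = Cb * ε ^ (-((n * (⌈ρ⌉₊ + 1) : ℕ) : ℤ)) := by ring

lemma backward
    (f : ℝ → ℝ → ℂ) (hf : IsModerate (Set.univ : Set ℝ) f)
    (K : Set ℝ) (hK : IsCompact K)
    (xx : ℝ → ℝ) (hxx : ∀ ε ∈ Set.Ioc (0:ℝ) 1, xx ε ∈ K)
    (ρ : ℝ) (hρ : 0 ≤ ρ)
    (en : ℕ → ℝ) (hen : ∀ n : ℕ, en n ∈ Set.Ioc (0:ℝ) 1)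
    (hen0 : Filter.Tendsto en Filter.atTop (𝓝 0))
    (hsmall : ∀ k : ℕ, ∀ y ∈ Set.Icc (xx (en k) - en k ^ ρ) (xx (en k) + en k ^ ρ),
      ‖f (en k) y‖ < en k ^ (k:ℕ)) :
    ∃ g : ℝ → ℝ → ℂ,
      IsModerate (Set.univ : Set ℝ) g ∧
      ¬ IsNegligible (Set.univ : Set ℝ) g ∧
      IsNegligible (Set.univ : Set ℝ) (fun ε x => f ε x * g ε x) := by
  classical
  have hsm : ∀ ε ∈ Set.Ioc (0:ℝ) 1, ContDiff ℝ (⊤:ℕ∞) (f ε) :=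
    fun ε hε => contDiffOn_univ.mp (hf.1 ε hε)
  have hmodD : ∀ K' : Set ℝ, IsCompact K' → ∀ n : ℕ, ∃ N : ℕ, ∃ C : ℝ, ∃ ε₀ : ℝ, 0 < ε₀ ∧
      ∀ ε : ℝ, 0 < ε → ε < ε₀ → ∀ x ∈ K', ‖iteratedDeriv n (f ε) x‖ ≤ C * ε ^ (-(N:ℤ)) := by
    intro K' hK' n
    obtain ⟨N, C, ε₀, h0, hb⟩ := hf.2 K' hK' (subset_univ _) n
    refine ⟨N, C, ε₀, h0, fun ε hε hεlt x hx => ?_⟩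
    rw [← norm_iteratedFDeriv_eq_norm_iteratedDeriv, ← iteratedFDerivWithin_univ]
    exact hb ε hε hεlt x hx
  set g : ℝ → ℝ → ℂ :=
    fun ε y => if ε ∈ Set.range en then bC ((ε ^ (ρ+1))⁻¹ * (y - xx ε)) else 0 with hgdef
  have hgsm : ∀ ε : ℝ, ContDiff ℝ (⊤:ℕ∞) (g ε) := by
    intro ε
    by_cases h : ε ∈ Set.range en
    · have : g ε = fun y => bC ((ε ^ (ρ+1))⁻¹ * (y - xx ε)) := by
        funext y; simp only [hgdef, if_pos h]
      rw [this]
      exact bC_smooth.comp (contDiff_const.mul (contDiff_id.sub contDiff_const))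
    · have : g ε = fun _ => 0 := by funext y; simp only [hgdef, if_neg h]
      rw [this]; exact contDiff_const
  refine ⟨g, ⟨fun ε _ => (hgsm ε).contDiffOn, ?_⟩, ?_, ⟨?_, ?_⟩⟩
  · -- moderate bounds for g
    intro K'' hK'' _ n
    obtain ⟨Nn, Cn, hCn0, hCnb⟩ := scaled_bump_bound hρ n
    refine ⟨Nn, Cn, 1, one_pos, ?_⟩
    intro ε hε hεlt x _
    rw [iteratedFDerivWithin_univ, norm_iteratedFDeriv_eq_norm_iteratedDeriv]
    by_cases h : ε ∈ Set.range en
    · have hge : g ε = fun y => bC ((ε ^ (ρ+1))⁻¹ * (y - xx ε)) := by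
        funext y; simp only [hgdef, if_pos h]
      rw [hge]
      exact hCnb ε hε hεlt.le (xx ε) x
    · have hge : g ε = fun _ => (0:ℂ) := by funext y; simp only [hgdef, if_neg h]
      rw [hge]
      have : iteratedDeriv n (fun _ : ℝ => (0:ℂ)) x = 0 := by
        rw [iteratedDeriv_eq_iteratedFDeriv, iteratedFDeriv_zero_fun]
        simp
      rw [this, norm_zero]
      positivity
  · -- g is not negligible
    intro hneg
    obtain ⟨C, ε₀, hε₀, hb⟩ := hneg.2 K hK (subset_univ _) 0 1
    have hpos : (0:ℝ) < min ε₀ (1/(max C 1)) := by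
      apply lt_min hε₀
      positivity
    obtain ⟨k, hk⟩ := (hen0.eventually (gt_mem_nhds hpos)).exists
    have hεk := hen k
    have hlt : en k < ε₀ := lt_of_lt_of_le hk (min_le_left _ _)
    have := hb (en k) hεk.1 hlt (xx (en k)) (hxx (en k) hεk)
    rw [iteratedFDerivWithin_univ, norm_iteratedFDeriv_zero] at this
    have hval : g (en k) (xx (en k)) = 1 := by
      simp only [hgdef, if_pos (Set.mem_range_self k), sub_self, mul_zero, bC_one]
    rw [hval] at this
    simp only [norm_one, pow_one] at this
    have h2 : C * en k ≤ max C 1 * en k :=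
      mul_le_mul_of_nonneg_right (le_max_left _ _) hεk.1.le
    have h3 : max C 1 * en k < max C 1 * (1/(max C 1)) := by
      apply mul_lt_mul_of_pos_left _ (lt_of_lt_of_le one_pos (le_max_right _ _))
      exact lt_of_lt_of_le hk (min_le_right _ _)
    rw [mul_one_div, div_self (ne_of_gt (lt_of_lt_of_le one_pos (le_max_right _ _)))] at h3
    linarith
  · -- product is smooth
    intro ε hε
    exact ((hsm ε hε).mul (hgsm ε)).contDiffOn
  · -- product is negligible
    intro K'' hK'' _ n m
    -- bounds for derivatives of g
    have hgb : ∀ i : ℕ, ∃ (Nn : ℕ) (Cn : ℝ), 0 ≤ Cn ∧ ∀ ε : ℝ, 0 < ε → ε ≤ 1 → ∀ a y : ℝ,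
        ‖iteratedDeriv i (fun z => bC ((ε ^ (ρ+1))⁻¹ * (z - a))) y‖ ≤ Cn * ε ^ (-(Nn:ℤ)) :=
      fun i => scaled_bump_bound hρ i
    choose NN CC hCC0 hCCb using hgb
    set Ng := (Finset.range (n+1)).sup NN with hNgdef
    set CbM := (Finset.range (n+1)).sup' ⟨n, Finset.self_mem_range_succ n⟩ CC with hCbMdef
    have hCbM : ∀ i ≤ n, CC i ≤ CbM := fun i hi =>
      Finset.le_sup' CC (Finset.mem_range_succ_iff.mpr hi)
    have hCbM0 : 0 ≤ CbM := (hCC0 n).trans (hCbM n le_rfl)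
    have hNg : ∀ i ≤ n, NN i ≤ Ng := fun i hi =>
      Finset.le_sup (Finset.mem_range_succ_iff.mpr hi)
    -- decay of derivatives of f on the small intervals
    obtain ⟨M, Cf, hCf0, ε₁, hε₁, hε₁1, hdecay⟩ := decay hsm hmodD hK hρ n (m + Ng)
    -- threshold forcing k ≥ M
    have hη : ∃ η : ℝ, 0 < η ∧ ∀ k, k < M → η ≤ en k := by
      rcases Nat.eq_zero_or_pos M with h | h
      · exact ⟨1, one_pos, fun k hk => absurd hk (by omega)⟩
      · refine ⟨(Finset.range M).inf' (Finset.nonempty_range_iff.mpr (by omega)) en, ?_, ?_⟩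
        · rw [Finset.lt_inf'_iff]
          exact fun i _ => (hen i).1
        · exact fun k hk => Finset.inf'_le en (Finset.mem_range.mpr hk)
    obtain ⟨η, hηpos, hηle⟩ := hη
    refine ⟨2^n * (Cf * CbM), min (min ε₁ η) ((1/2:ℝ)^(n+1)), by positivity, ?_⟩
    intro ε hε hεlt x hx
    have hεε₁ : ε < ε₁ := lt_of_lt_of_le hεlt ((min_le_left _ _).trans (min_le_left _ _))
    have hεη : ε < η := lt_of_lt_of_le hεlt ((min_le_left _ _).trans (min_le_right _ _))
    have hεhalf : ε ≤ (1/2:ℝ)^(n+1) := le_of_lt (lt_of_lt_of_le hεlt (min_le_right _ _))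
    have hε1 : ε ≤ 1 := hεhalf.trans (pow_le_one₀ (by norm_num) (by norm_num))
    beta_reduce
    rw [iteratedFDerivWithin_univ]
    by_cases hr : ε ∈ Set.range en
    · obtain ⟨k, hk⟩ := hr
      have hεIoc : ε ∈ Set.Ioc (0:ℝ) 1 := ⟨hε, hε1⟩
      have hkM : M ≤ k := by
        by_contra hcon
        exact absurd (hk ▸ hηle k (by omega)) (not_le.mpr hεη)
      have hyp : ∀ y ∈ Icc (xx ε - ε ^ ρ) (xx ε + ε ^ ρ), ‖f ε y‖ ≤ ε ^ M := by
        intro y hy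
        have := hsmall k y (by rw [hk]; exact hk ▸ hy)
        rw [hk] at this
        exact this.le.trans (pow_le_pow_of_le_one hε.le hε1 hkM)
      have hfd := hdecay ε hε hεε₁ (xx ε) (hxx ε hεIoc) hyp
      have hge : g ε = fun y => bC ((ε ^ (ρ+1))⁻¹ * (y - xx ε)) := by
        funext y
        simp only [hgdef]
        rw [if_pos (show ε ∈ Set.range en from ⟨k, hk⟩)]
      have h2δ : 2 * ε ^ (ρ+1) ≤ ε ^ ρ / 2 ^ n := by
        have e3 : ε ^ (ρ + 1) = ε ^ ρ * ε := by
          rw [Real.rpow_add hε, Real.rpow_one]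
        have hrpos : (0:ℝ) < ε ^ ρ := Real.rpow_pos_of_pos hε ρ
        rw [e3]
        have : 2 * (ε ^ ρ * ε) ≤ 2 * (ε ^ ρ * (1/2:ℝ)^(n+1)) := by
          have := mul_le_mul_of_nonneg_left hεhalf hrpos.le
          linarith
        refine this.trans_eq ?_
        rw [pow_succ]
        field_simp
        rw [← mul_pow]; norm_num
      by_cases hxc : |x - xx ε| ≤ ε ^ ρ / 2 ^ n
      · -- Leibniz estimate
        have hxmem : x ∈ Icc (xx ε - ε ^ ρ / 2 ^ n) (xx ε + ε ^ ρ / 2 ^ n) := by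
          rw [abs_le] at hxc
          constructor <;> linarith [hxc.1, hxc.2]
        have hmul := norm_iteratedFDeriv_mul_le (𝕜 := ℝ) (N := ((⊤:ℕ∞) : WithTop ℕ∞))
          (hsm ε hεIoc) (hgsm ε) x (by exact_mod_cast le_top : (n : WithTop ℕ∞) ≤ ((⊤:ℕ∞) : WithTop ℕ∞))
        refine hmul.trans ?_
        have hterm : ∀ i ∈ Finset.range (n+1),
            (n.choose i : ℝ) * ‖iteratedFDeriv ℝ i (f ε) x‖ * ‖iteratedFDeriv ℝ (n-i) (g ε) x‖
              ≤ (n.choose i : ℝ) * ((Cf * CbM) * ε ^ m) := by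
          intro i hi
          have hin : i ≤ n := Finset.mem_range_succ_iff.mp hi
          have hfi : ‖iteratedFDeriv ℝ i (f ε) x‖ ≤ Cf * ε ^ (m + Ng) := by
            rw [norm_iteratedFDeriv_eq_norm_iteratedDeriv]
            exact hfd i hin x hxmem
          have hgi : ‖iteratedFDeriv ℝ (n-i) (g ε) x‖ ≤ CbM * ε ^ (-(Ng:ℤ)) := by
            rw [norm_iteratedFDeriv_eq_norm_iteratedDeriv, hge]
            refine (hCCb (n-i) ε hε hε1 (xx ε) x).trans ?_
            exact mul_le_mul (hCbM _ (by omega)) (zpow_neg_mono hε hε1 (hNg _ (by omega)))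
              (zpow_nonneg hε.le _) hCbM0
          have hkey : ‖iteratedFDeriv ℝ i (f ε) x‖ * ‖iteratedFDeriv ℝ (n-i) (g ε) x‖
              ≤ (Cf * ε ^ (m + Ng)) * (CbM * ε ^ (-(Ng:ℤ))) :=
            mul_le_mul hfi hgi (norm_nonneg _) (by positivity)
          have heq : (Cf * ε ^ (m + Ng)) * (CbM * ε ^ (-(Ng:ℤ))) = (Cf * CbM) * ε ^ m := by
            have : (ε:ℝ) ^ (m + Ng) * ε ^ (-(Ng:ℤ)) = ε ^ m := by
              rw [← zpow_natCast ε (m + Ng), ← zpow_add₀ (ne_of_gt hε), ← zpow_natCast ε m]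
              congr 1
              push_cast
              ring
            calc (Cf * ε ^ (m + Ng)) * (CbM * ε ^ (-(Ng:ℤ)))
                = (Cf * CbM) * (ε ^ (m + Ng) * ε ^ (-(Ng:ℤ))) := by ring
              _ = (Cf * CbM) * ε ^ m := by rw [this]
          rw [mul_assoc]
          refine mul_le_mul_of_nonneg_left ?_ (by positivity)
          exact hkey.trans_eq heq
        refine (Finset.sum_le_sum hterm).trans ?_
        rw [← Finset.sum_mul]
        have : (∑ i ∈ Finset.range (n+1), (n.choose i : ℝ)) = 2^n := by
          rw [← Nat.cast_sum]
          rw [Nat.sum_range_choose]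
          push_cast
          ring
        rw [this]
        ring_nf
        exact le_refl _
      · -- away from the bump: the product vanishes near x
        push_neg at hxc
        have hgz : ∀ y : ℝ, ¬ (|y - xx ε| < 2 * ε ^ (ρ+1)) → g ε y = 0 := by
          intro y hy
          push_neg at hy
          rw [hge]
          apply bC_zero
          have hδ : (0:ℝ) < ε ^ (ρ+1) := Real.rpow_pos_of_pos hε _
          rw [abs_mul, abs_of_pos (inv_pos.mpr hδ)]
          have h2' : (ε ^ (ρ+1))⁻¹ * (2 * ε ^ (ρ+1)) ≤ (ε ^ (ρ+1))⁻¹ * |y - xx ε| :=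
            mul_le_mul_of_nonneg_left hy (inv_pos.mpr hδ).le
          calc (2:ℝ) = (ε ^ (ρ+1))⁻¹ * (2 * ε ^ (ρ+1)) := by field_simp
            _ ≤ (ε ^ (ρ+1))⁻¹ * |y - xx ε| := h2'
        have hzero : (fun y => f ε y * g ε y) =ᶠ[𝓝 x] (fun _ => (0:ℂ)) := by
          have hrlt : 0 < |x - xx ε| - ε ^ ρ / 2 ^ n := by linarith
          filter_upwards [Metric.ball_mem_nhds x hrlt] with y hy
          have hyd : |y - x| < |x - xx ε| - ε ^ ρ / 2 ^ n := by
            rw [Metric.mem_ball, Real.dist_eq] at hy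
            exact hy
          have : ¬ (|y - xx ε| < 2 * ε ^ (ρ+1)) := by
            push_neg
            have h1 : |x - xx ε| - |y - x| ≤ |y - xx ε| := by
              have := abs_sub_abs_le_abs_sub (x - xx ε) (x - y)
              have h2 : (x - xx ε) - (x - y) = y - xx ε := by ring
              rw [h2] at this
              have h3 : |x - y| = |y - x| := abs_sub_comm x y
              linarith [this, h3.le]
            calc 2 * ε ^ (ρ+1) ≤ ε ^ ρ / 2 ^ n := h2δ
              _ ≤ |y - xx ε| := by linarith
          rw [hgz y this, mul_zero]
        have hx0 : f ε x * g ε x = 0 := by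
          rw [hgz x (by push_neg; linarith [h2δ]), mul_zero]
        have hzero' : (fun y => f ε y * g ε y) =ᶠ[𝓝[(univ : Set ℝ)] x] (fun _ => (0:ℂ)) := by
          rw [nhdsWithin_univ]; exact hzero
        have heq := Filter.EventuallyEq.iteratedFDerivWithin_eq (𝕜 := ℝ) hzero' hx0 n
        rw [← iteratedFDerivWithin_univ, heq, iteratedFDerivWithin_univ, iteratedFDeriv_zero_fun]
        simp only [Pi.zero_apply, norm_zero]
        positivity
    · -- ε not in the range: the product is identically zero
      have hge : (fun y => f ε y * g ε y) = fun _ => (0:ℂ) := by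
        funext y; simp only [hgdef, if_neg hr, mul_zero]
      rw [hge, iteratedFDeriv_zero_fun]
      simp only [Pi.zero_apply, norm_zero]
      positivity


lemma modD {u : ℝ → ℝ → ℂ} (hu : IsModerate (Set.univ : Set ℝ) u) :
    ∀ K' : Set ℝ, IsCompact K' → ∀ n : ℕ, ∃ N : ℕ, ∃ C : ℝ, ∃ ε₀ : ℝ, 0 < ε₀ ∧
      ∀ ε : ℝ, 0 < ε → ε < ε₀ → ∀ x ∈ K', ‖iteratedDeriv n (u ε) x‖ ≤ C * ε ^ (-(N:ℤ)) := by
  intro K' hK' n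
  obtain ⟨N, C, ε₀, h0, hb⟩ := hu.2 K' hK' (subset_univ _) n
  refine ⟨N, C, ε₀, h0, fun ε hε hεlt x hx => ?_⟩
  rw [← norm_iteratedFDeriv_eq_norm_iteratedDeriv, ← iteratedFDerivWithin_univ]
  exact hb ε hε hεlt x hx


lemma forward
    (f : ℝ → ℝ → ℂ) (hf : IsModerate (Set.univ : Set ℝ) f)
    (g : ℝ → ℝ → ℂ) (hgmod : IsModerate (Set.univ : Set ℝ) g)
    (hgnneg : ¬ IsNegligible (Set.univ : Set ℝ) g)
    (hfg : IsNegligible (Set.univ : Set ℝ) (fun ε x => f ε x * g ε x)) :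
    (∃ (K : Set ℝ), IsCompact K ∧
      ∃ x : ℝ → ℝ, (∀ ε ∈ Set.Ioc (0:ℝ) 1, x ε ∈ K) ∧
      ∃ ρ : ℝ, 0 ≤ ρ ∧
      ∃ en : ℕ → ℝ, (∀ n : ℕ, en n ∈ Set.Ioc (0:ℝ) 1) ∧
        Filter.Tendsto en Filter.atTop (𝓝 0) ∧
        ∀ k : ℕ, ∀ y ∈ Set.Icc (x (en k) - en k ^ ρ) (x (en k) + en k ^ ρ),
          ‖f (en k) y‖ < en k ^ (k : ℕ)) := by
  classical
  have hsmg : ∀ ε ∈ Set.Ioc (0:ℝ) 1, ContDiff ℝ (⊤:ℕ∞) (g ε) :=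
    fun ε hε => contDiffOn_univ.mp (hgmod.1 ε hε)
  -- order-0 bounds for g must fail on some compact set
  have h0fail : ¬ (∀ K : Set ℝ, IsCompact K → ∀ m : ℕ, ∃ C : ℝ, ∃ ε₀ : ℝ, 0 < ε₀ ∧
      ∀ ε : ℝ, 0 < ε → ε < ε₀ → ∀ x ∈ K, ‖g ε x‖ ≤ C * ε ^ m) := by
    intro h0
    apply hgnneg
    refine ⟨hgmod.1, fun K hK _ n m => ?_⟩
    obtain ⟨C, ε₀, h1, h2⟩ := bootstrap_neg hsmg (modD hgmod) h0 n K hK m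
    refine ⟨C, ε₀, h1, fun ε hε hlt x hx => ?_⟩
    rw [iteratedFDerivWithin_univ, norm_iteratedFDeriv_eq_norm_iteratedDeriv]
    exact h2 ε hε hlt x hx
  push_neg at h0fail
  obtain ⟨K₁, hK₁, m₁, hprop⟩ := h0fail
  set K₂ := Metric.cthickening 1 K₁ with hK₂def
  have hK₂ : IsCompact K₂ := hK₁.cthickening
  have hK₁sub : K₁ ⊆ K₂ := Metric.self_subset_cthickening K₁
  -- first-derivative moderate bound for g on K₂
  obtain ⟨N, Cg', εg, hεg, hCgb⟩ := modD hgmod K₂ hK₂ 1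
  set Cg := max Cg' 0 with hCgdef
  have hCg0 : 0 ≤ Cg := le_max_right _ _
  have hCgb' : ∀ ε : ℝ, 0 < ε → ε < εg → ∀ z ∈ K₂, ‖deriv (g ε) z‖ ≤ Cg * ε ^ (-(N:ℤ)) := by
    intro ε hε hlt z hz
    rw [← iteratedDeriv_one]
    exact (hCgb ε hε hlt z hz).trans
      (mul_le_mul_of_nonneg_right (le_max_left _ _) (zpow_nonneg hε.le _))
  -- negligibility of the product, order 0, in convenient form
  have hprod : ∀ m : ℕ, ∃ Cm : ℝ, 1 ≤ Cm ∧ ∃ ε₀m : ℝ, 0 < ε₀m ∧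
      ∀ ε : ℝ, 0 < ε → ε < ε₀m → ∀ y ∈ K₂, ‖f ε y * g ε y‖ ≤ Cm * ε ^ m := by
    intro m
    obtain ⟨C, ε₀, h1, h2⟩ := hfg.2 K₂ hK₂ (subset_univ _) 0 m
    refine ⟨max C 1, le_max_right _ _, ε₀, h1, fun ε hε hlt y hy => ?_⟩
    have := h2 ε hε hlt y hy
    rw [iteratedFDerivWithin_univ, norm_iteratedFDeriv_zero] at this
    exact this.trans (mul_le_mul_of_nonneg_right (le_max_left _ _) (pow_nonneg hε.le m))
  choose Cm hCm1 ε₀m hε₀m hCmb using hprod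
  set ρ : ℝ := ((m₁ + N + 2 : ℕ) : ℝ) with hρdef
  -- the one-step choice
  have main : ∀ (k : ℕ) (p : ℝ), 0 < p → ∃ ε : ℝ, 0 < ε ∧ ε < p ∧ ε < 1/((k:ℝ)+1) ∧
      ∃ x, x ∈ K₁ ∧ ∀ y ∈ Icc (x - ε ^ ρ) (x + ε ^ ρ), ‖f ε y‖ < ε ^ k := by
    intro k p hp
    set m := k + m₁ + 1 with hmdef
    have hCmpos : 0 < Cm m := lt_of_lt_of_le one_pos (hCm1 m)
    set ε₀ := min (min p (1/((k:ℝ)+1))) (min (min εg (ε₀m m))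
      (min (1/(2*Cm m)) (1/(2*(Cg+1))))) with hε₀def
    have hε₀pos : 0 < ε₀ := by
      refine lt_min (lt_min hp (by positivity)) (lt_min (lt_min hεg (hε₀m m))
        (lt_min (by positivity) (by positivity)))
    obtain ⟨ε, hε, hεlt, x, hxK, hgx⟩ := hprop 1 ε₀ hε₀pos
    rw [one_mul] at hgx
    have hεp : ε < p := lt_of_lt_of_le hεlt ((min_le_left _ _).trans (min_le_left _ _))
    have hεk1 : ε < 1/((k:ℝ)+1) :=
      lt_of_lt_of_le hεlt ((min_le_left _ _).trans (min_le_right _ _))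
    have hεεg : ε < εg :=
      lt_of_lt_of_le hεlt ((min_le_right _ _).trans ((min_le_left _ _).trans (min_le_left _ _)))
    have hεε₀m : ε < ε₀m m :=
      lt_of_lt_of_le hεlt ((min_le_right _ _).trans ((min_le_left _ _).trans (min_le_right _ _)))
    have hεCm : ε < 1/(2*Cm m) :=
      lt_of_lt_of_le hεlt ((min_le_right _ _).trans ((min_le_right _ _).trans (min_le_left _ _)))
    have hεCg : ε < 1/(2*(Cg+1)) :=
      lt_of_lt_of_le hεlt ((min_le_right _ _).trans ((min_le_right _ _).trans (min_le_right _ _)))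
    have hε1 : ε ≤ 1 := by
      refine hεk1.le.trans ?_
      rw [div_le_one (by positivity)]
      have : (0:ℝ) ≤ (k:ℝ) := Nat.cast_nonneg k
      linarith
    refine ⟨ε, hε, hεp, hεk1, x, hxK, ?_⟩
    intro y hy
    have hρnat : ε ^ ρ = ε ^ (m₁+N+2 : ℕ) := by
      rw [hρdef, Real.rpow_natCast]
    have hrle1 : ε ^ (m₁+N+2 : ℕ) ≤ 1 := pow_le_one₀ hε.le hε1
    have hsubK₂ : Icc (x - ε ^ ρ) (x + ε ^ ρ) ⊆ K₂ := by
      intro z hz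
      refine Metric.mem_cthickening_of_dist_le z x 1 K₁ hxK ?_
      rw [Real.dist_eq, abs_le]
      rw [hρnat] at hz
      constructor
      · linarith [hz.1, hrle1]
      · linarith [hz.2, hrle1]
    have hymem : y ∈ K₂ := hsubK₂ hy
    have hxmem : x ∈ Icc (x - ε ^ ρ) (x + ε ^ ρ) := by
      have : (0:ℝ) < ε ^ ρ := by rw [hρnat]; positivity
      constructor <;> linarith
    -- lower bound for ‖g ε y‖
    have hgdiff : ∀ z ∈ Icc (x - ε ^ ρ) (x + ε ^ ρ), DifferentiableAt ℝ (g ε) z := by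
      intro z _
      exact ((hsmg ε ⟨hε, hε1⟩).differentiable (by simp)) z
    have hmvt := Convex.norm_image_sub_le_of_norm_deriv_le hgdiff
      (fun z hz => hCgb' ε hε hεεg z (hsubK₂ hz)) (convex_Icc _ _) hxmem hy
    have hdist : ‖y - x‖ ≤ ε ^ (m₁+N+2 : ℕ) := by
      rw [Real.norm_eq_abs, abs_le]
      rw [hρnat] at hy
      constructor
      · linarith [hy.1]
      · linarith [hy.2]
    have hgy_diff : ‖g ε y - g ε x‖ ≤ Cg * ε ^ (m₁+1) := by
      refine hmvt.trans ?_
      have step1 : Cg * ε ^ (-(N:ℤ)) * ‖y - x‖ ≤ Cg * ε ^ (-(N:ℤ)) * ε ^ (m₁+N+2 : ℕ) := by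
        refine mul_le_mul_of_nonneg_left hdist ?_
        positivity
      refine step1.trans ?_
      have hzz : ε ^ (-(N:ℤ)) * ε ^ (m₁+N+2 : ℕ) = ε ^ (m₁+2) := by
        rw [← zpow_natCast ε (m₁+N+2), ← zpow_add₀ (ne_of_gt hε), ← zpow_natCast ε (m₁+2)]
        congr 1
        push_cast
        ring
      rw [mul_assoc, hzz]
      refine mul_le_mul_of_nonneg_left ?_ hCg0
      exact pow_le_pow_of_le_one hε.le hε1 (by omega)
    have hCgε : Cg * ε ≤ 1/2 := by
      have h1 : Cg * ε ≤ Cg * (1/(2*(Cg+1))) := mul_le_mul_of_nonneg_left hεCg.le hCg0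
      refine h1.trans ?_
      rw [mul_one_div, div_le_div_iff₀ (by positivity) (by norm_num : (0:ℝ) < 2)]
      linarith [hCg0]
    have hglow : (1/2) * ε ^ m₁ ≤ ‖g ε y‖ := by
      have h1 : ‖g ε x‖ - ‖g ε y - g ε x‖ ≤ ‖g ε y‖ := by
        have := norm_sub_norm_le (g ε x) (g ε x - (g ε x - g ε y))
        have he : g ε x - (g ε x - g ε y) = g ε y := by ring
        rw [he] at this
        have h2 := norm_sub_le (g ε y) (g ε x)
        have h3 := abs_norm_sub_norm_le (g ε y) (g ε x)
        have h4 := abs_le.mp h3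
        linarith [h4.1]
      have h5 : ‖g ε y - g ε x‖ ≤ (1/2) * ε ^ m₁ := by
        refine hgy_diff.trans ?_
        have : ε ^ (m₁+1) = ε * ε ^ m₁ := by rw [pow_succ]; ring
        rw [this, ← mul_assoc]
        exact mul_le_mul_of_nonneg_right (by linarith [hCgε] ) (pow_nonneg hε.le m₁)
      linarith [hgx]
    -- conclude
    have hfgbound := hCmb m ε hε hεε₀m y hymem
    rw [norm_mul] at hfgbound
    have hpowsplit : ε ^ m = ε ^ k * ε ^ m₁ * ε := by
      rw [hmdef, pow_add, pow_add, pow_one]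
    have hCmε : 2 * Cm m * ε < 1 := by
      have h2c : (0:ℝ) < 2 * Cm m := by positivity
      have hmul := mul_lt_mul_of_pos_left hεCm h2c
      rwa [mul_one_div, div_self (ne_of_gt h2c)] at hmul
    have hk0 : (0:ℝ) < ε ^ k := pow_pos hε k
    have hm₁0 : (0:ℝ) < ε ^ m₁ := pow_pos hε m₁
    nlinarith [hfgbound, hglow, norm_nonneg (f ε y), norm_nonneg (g ε y),
      mul_le_mul_of_nonneg_left hglow (norm_nonneg (f ε y)),
      mul_pos hk0 hm₁0]
  -- recursive construction of the sequence
  choose FF h1 h2 h3 XX hXXK hXX using main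
  set P : ℕ → {p : ℝ // 0 < p} :=
    fun n => Nat.rec ⟨1, one_pos⟩ (fun k pk => ⟨FF k pk.1 pk.2, h1 k pk.1 pk.2⟩) n with hPdef
  set en : ℕ → ℝ := fun k => FF k (P k).1 (P k).2 with hendef
  set xp : ℕ → ℝ := fun k => XX k (P k).1 (P k).2 with hxpdef
  have hPsucc : ∀ k, (P (k+1)).1 = en k := fun k => rfl
  have hen_pos : ∀ k, 0 < en k := fun k => h1 k (P k).1 (P k).2
  have hen_small : ∀ k, en k < 1/((k:ℝ)+1) := fun k => h3 k (P k).1 (P k).2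
  have hen_anti : StrictAnti en := by
    apply strictAnti_nat_of_succ_lt
    intro k
    exact h2 (k+1) (P (k+1)).1 (P (k+1)).2
  have hen_inj : Function.Injective en := hen_anti.injective
  have hen_Ioc : ∀ k, en k ∈ Set.Ioc (0:ℝ) 1 := by
    intro k
    refine ⟨hen_pos k, (hen_small k).le.trans ?_⟩
    rw [div_le_one (by positivity)]
    have : (0:ℝ) ≤ (k:ℝ) := Nat.cast_nonneg k
    linarith
  have hen_tendsto : Filter.Tendsto en Filter.atTop (𝓝 0) := by
    apply squeeze_zero (fun k => (hen_pos k).le) (fun k => (hen_small k).le)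
    exact tendsto_one_div_add_atTop_nhds_zero_nat
  set xnet : ℝ → ℝ := fun ε => if h : ∃ k, en k = ε then xp (Classical.choose h) else xp 0
    with hxnetdef
  have hxnetK : ∀ ε ∈ Set.Ioc (0:ℝ) 1, xnet ε ∈ K₁ := by
    intro ε _
    simp only [hxnetdef]
    by_cases h : ∃ k, en k = ε
    · rw [dif_pos h]; exact hXXK _ _ _
    · rw [dif_neg h]; exact hXXK _ _ _
  have hxnet_en : ∀ k, xnet (en k) = xp k := by
    intro k
    have h : ∃ j, en j = en k := ⟨k, rfl⟩
    simp only [hxnetdef]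
    rw [dif_pos h]
    congr 1
    exact hen_inj (Classical.choose_spec h)
  refine ⟨K₁, hK₁, xnet, hxnetK, ρ, by rw [hρdef]; positivity, en, hen_Ioc, hen_tendsto, ?_⟩
  intro k y hy
  rw [hxnet_en k] at hy
  exact hXX k (P k).1 (P k).2 y hy


end ZD_Aux

/-- characterization of zero divisors in `G(ℝ)`: a nonzero `f` is a zero
divisor iff some compactly supported net of points carries intervals of radius `ε_k^ρ`
(along a zero sequence `ε_k`) on which `|f_{ε_k}| < ε_k^k`. -/
theorem statement_19
    (f : ℝ → ℝ → ℂ)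
    (hf : IsModerate (Set.univ : Set ℝ) f)
    (hne : ¬ IsNegligible (Set.univ : Set ℝ) f) :
    (∃ g : ℝ → ℝ → ℂ,
      IsModerate (Set.univ : Set ℝ) g ∧
      ¬ IsNegligible (Set.univ : Set ℝ) g ∧
      IsNegligible (Set.univ : Set ℝ) (fun ε x => f ε x * g ε x))
    ↔
    (∃ (K : Set ℝ), IsCompact K ∧
      ∃ x : ℝ → ℝ, (∀ ε ∈ Set.Ioc (0:ℝ) 1, x ε ∈ K) ∧
      ∃ ρ : ℝ, 0 ≤ ρ ∧
      ∃ en : ℕ → ℝ, (∀ n : ℕ, en n ∈ Set.Ioc (0:ℝ) 1) ∧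
        Filter.Tendsto en Filter.atTop (𝓝 0) ∧
        ∀ k : ℕ, ∀ y ∈ Set.Icc (x (en k) - en k ^ ρ) (x (en k) + en k ^ ρ),
          ‖f (en k) y‖ < en k ^ (k : ℕ)) := by
  constructor
  · rintro ⟨g, hgmod, hgnneg, hfgneg⟩
    exact forward f hf g hgmod hgnneg hfgneg
  · rintro ⟨K, hK, x, hx, ρ, hρ, en, hen, hen0, hsmall⟩
    exact backward f hf K hK x hx ρ hρ en hen hen0 hsmall
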